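/- arXiv:2007.03193 — 4 statements merged into one kernel-verified Lean document; each statement's English description precedes it below -/
import Mathlib

section
/- For all nonnegative integers ℓ, a, and t⋆ (with a sufficiently large, e.g. a ≥ (t⋆+1)ℓ so that all binomial coefficients are in their natural range, or interpreting binomial coefficients as generalized/polynomial binomial coefficients), the alternating sum ∑_{j=0}^{ℓ} (−1)^{ℓ−j} · C(a − t⋆·j, j) · C(a − t⋆·j − j, ℓ − j) equals (−1)^ℓ · (t⋆)^ℓ. In particular, the sum is independent of a. -/
open Finset

section
open Nat Function Polynomial

private lemma myFwdDiff_pow (k : ℕ) :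
    fwdDiff (1:ℕ) (fun x : ℕ => (x:ℤ)^k) =
      fun x : ℕ => ∑ i ∈ range k, (k.choose i : ℤ) * (x:ℤ)^i := by
  funext x
  simp only [fwdDiff]
  rw [Nat.cast_add, Nat.cast_one, add_pow, sum_range_succ]
  simp [mul_comm]

private lemma myA : ∀ k n : ℕ, k < n →
    (fwdDiff (1:ℕ))^[n] (fun x : ℕ => (x:ℤ)^k) = fun _ => 0 := by
  intro k
  induction k using Nat.strong_induction_on with
  | _ k IH =>
    intro n hk
    match n, hk with
    | m + 1, hk =>
      rw [Function.iterate_succ_apply, myFwdDiff_pow]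
      have hfun : (fun x : ℕ => ∑ i ∈ range k, (k.choose i : ℤ) * (x:ℤ)^i)
          = ∑ i ∈ range k, ((k.choose i : ℤ) • fun x : ℕ => (x:ℤ)^i) := by
        funext x; simp
      rw [hfun, fwdDiff_iter_finset_sum]
      funext y
      rw [Finset.sum_apply]
      apply Finset.sum_eq_zero
      intro i hi
      have hi' : i < k := mem_range.mp hi
      rw [fwdDiff_iter_const_smul, IH i hi' m (by omega)]
      simp

private lemma myB : ∀ n : ℕ, (fwdDiff (1:ℕ))^[n] (fun x : ℕ => (x:ℤ)^n) = fun _ => (n ! : ℤ) := by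
  intro n
  induction n with
  | zero => funext x; simp
  | succ n IH =>
    rw [Function.iterate_succ_apply, myFwdDiff_pow]
    have hfun : (fun x : ℕ => ∑ i ∈ range (n+1), ((n+1).choose i : ℤ) * (x:ℤ)^i)
        = ∑ i ∈ range (n+1), (((n+1).choose i : ℤ) • fun x : ℕ => (x:ℤ)^i) := by
      funext x; simp
    rw [hfun, fwdDiff_iter_finset_sum, sum_range_succ]
    funext y
    rw [Pi.add_apply, Finset.sum_apply,
      Finset.sum_eq_zero (fun i hi => by
        rw [fwdDiff_iter_const_smul, myA i n (mem_range.mp hi)]; simp),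
      fwdDiff_iter_const_smul, IH]
    simp [Nat.factorial_succ]

private lemma myC (n : ℕ) (P : Polynomial ℤ) (hP : P.natDegree < n + 1) :
    (fwdDiff (1:ℕ))^[n] (fun x : ℕ => P.eval (x:ℤ)) = fun _ => (n ! : ℤ) * P.coeff n := by
  have hfun : (fun x : ℕ => P.eval (x:ℤ))
      = ∑ i ∈ range (n+1), ((P.coeff i) • fun x : ℕ => (x:ℤ)^i) := by
    funext x
    rw [Polynomial.eval_eq_sum_range' hP]
    simp
  rw [hfun, fwdDiff_iter_finset_sum, sum_range_succ]
  funext y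
  rw [Pi.add_apply, Finset.sum_apply,
    Finset.sum_eq_zero (fun i hi => by
      rw [fwdDiff_iter_const_smul, myA i n (mem_range.mp hi)]; simp),
    fwdDiff_iter_const_smul, myB]
  simp [mul_comm]

theorem stmt_0 (ℓ tstar a : ℕ) (ha : (tstar + 1) * ℓ ≤ a) :
    ∑ j ∈ Finset.range (ℓ + 1),
      (-1 : ℤ) ^ (ℓ - j) * ((a - tstar * j).choose j : ℤ)
        * ((a - tstar * j - j).choose (ℓ - j) : ℤ)
      = (-1 : ℤ) ^ ℓ * (tstar : ℤ) ^ ℓ := by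
  set P : Polynomial ℤ :=
    ∏ i ∈ range ℓ, (Polynomial.C ((a:ℤ) - i) - Polynomial.C (tstar:ℤ) * Polynomial.X) with hPdef
  have hdeg1 : ∀ i ∈ range ℓ,
      (Polynomial.C ((a:ℤ) - i) - Polynomial.C (tstar:ℤ) * Polynomial.X).natDegree ≤ 1 := by
    intro i _
    exact le_trans (Polynomial.natDegree_sub_le _ _)
      (max_le (by rw [Polynomial.natDegree_C]; omega)
      (le_trans (Polynomial.natDegree_C_mul_le _ _) Polynomial.natDegree_X_le))
  have hdeg : P.natDegree < ℓ + 1 := by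
    have := Polynomial.natDegree_prod_le (range ℓ)
      (fun i => Polynomial.C ((a:ℤ) - i) - Polynomial.C (tstar:ℤ) * Polynomial.X)
    have h2 : ∑ i ∈ range ℓ, (Polynomial.C ((a:ℤ) - i)
        - Polynomial.C (tstar:ℤ) * Polynomial.X).natDegree ≤ ℓ := by
      calc _ ≤ ∑ _i ∈ range ℓ, 1 := Finset.sum_le_sum hdeg1
        _ = ℓ := by simp
    have h3 := le_trans this h2
    rw [← hPdef] at h3
    omega
  have hcoeff : P.coeff ℓ = (-(tstar:ℤ))^ℓ := by
    have := Polynomial.coeff_prod_of_natDegree_le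
      (f := fun i => Polynomial.C ((a:ℤ) - i) - Polynomial.C (tstar:ℤ) * Polynomial.X)
      (n := 1) (s := range ℓ) hdeg1
    simp only [card_range, mul_one] at this
    rw [hPdef, this]
    rw [Finset.prod_congr rfl (fun i _ => ?_), Finset.prod_const, card_range]
    simp [Polynomial.coeff_C]
  have hPeval : ∀ x : ℕ, P.eval (x:ℤ) = ∏ i ∈ range ℓ, ((a:ℤ) - i - tstar * x) := by
    intro x
    simp [hPdef, Polynomial.eval_prod]
  have hfact : (ℓ ! : ℤ) ≠ 0 := Int.natCast_ne_zero.mpr (Nat.factorial_ne_zero ℓ)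
  apply mul_left_cancel₀ hfact
  have hd := fwdDiff_iter_eq_sum_shift (1:ℕ) (fun x : ℕ => P.eval (x:ℤ)) ℓ 0
  rw [myC ℓ P hdeg] at hd
  calc (ℓ ! : ℤ) * ∑ j ∈ Finset.range (ℓ + 1),
        (-1 : ℤ) ^ (ℓ - j) * ((a - tstar * j).choose j : ℤ)
          * ((a - tstar * j - j).choose (ℓ - j) : ℤ)
      = ∑ j ∈ range (ℓ + 1),
          ((-1 : ℤ) ^ (ℓ - j) * (ℓ.choose j : ℤ)) • (fun x : ℕ => P.eval (x:ℤ)) (0 + j • 1) := by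
        rw [Finset.mul_sum]
        refine Finset.sum_congr rfl fun j hj => ?_
        have hj' : j ≤ ℓ := by have := mem_range.mp hj; omega
        have h1 : tstar * j + ℓ ≤ a := by
          calc tstar * j + ℓ ≤ tstar * ℓ + ℓ := by
                have := Nat.mul_le_mul_left tstar hj'; omega
            _ = (tstar + 1) * ℓ := by ring
            _ ≤ a := ha
        have hch : (a - tstar*j).choose ℓ * ℓ.choose j
            = (a - tstar*j).choose j * ((a - tstar*j - j).choose (ℓ - j)) :=
          Nat.choose_mul hj'
        have key : ((a - tstar*j).choose ℓ : ℤ) * (ℓ.choose j : ℤ)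
            = ((a - tstar*j).choose j : ℤ) * (((a - tstar*j - j).choose (ℓ - j) : ℕ) : ℤ) := by
          exact_mod_cast congrArg (Nat.cast : ℕ → ℤ) hch
        have heval : Polynomial.eval ((j:ℕ):ℤ) P
            = (ℓ ! : ℤ) * ((a - tstar*j).choose ℓ : ℤ) := by
          have h2 : ((ℓ ! * (a - tstar*j).choose ℓ : ℕ) : ℤ)
              = Polynomial.eval ((j : ℕ) : ℤ) P := by
            rw [← Nat.descFactorial_eq_factorial_mul_choose,
              Nat.descFactorial_eq_prod_range, Nat.cast_prod, hPeval j]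
            refine Finset.prod_congr rfl fun i hi => ?_
            have hi' : i < ℓ := mem_range.mp hi
            have hle : tstar * j + i ≤ a := by omega
            rw [Nat.sub_sub, Nat.cast_sub hle]
            push_cast
            ring
          rw [← h2]
          push_cast
          ring
        simp only [smul_eq_mul, mul_one, zero_add]
        rw [heval]
        linear_combination ((-1:ℤ))^(ℓ - j) * (ℓ ! : ℤ) * key.symm
    _ = (ℓ ! : ℤ) * P.coeff ℓ := hd.symm
    _ = (ℓ ! : ℤ) * ((-1 : ℤ) ^ ℓ * (tstar : ℤ) ^ ℓ) := by
        rw [hcoeff, neg_pow]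
end
end

section
/- Fix an integer t⋆ ≥ 0 and p ∈ (0,1). Define a(t) := ∑_{x=0}^{⌊(t−1)/(t⋆+1)⌋} ∑_{k=1}^{t⋆+1} C(t−k−x·t⋆, x) · 1[t−k−x(t⋆+1) ≥ 0] · p^{x+1} · (1−p)^{t−k−(t⋆+1)x}. Then a(t) → (t⋆+1)·p / (1 + t⋆·p) as t → ∞. -/
open Finset Filter

noncomputable def bbf (tstar : ℕ) (p : ℝ) (m x : ℕ) : ℝ :=
  if (tstar+1)*x ≤ m then ((m - tstar*x).choose x : ℝ) * p^x * (1-p)^(m - (tstar+1)*x) else 0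

noncomputable def bb (tstar : ℕ) (p : ℝ) (m : ℕ) : ℝ :=
  ∑ x ∈ Finset.range (m+1), bbf tstar p m x

lemma bb_zero (tstar : ℕ) (p : ℝ) : bb tstar p 0 = 1 := by
  simp [bb, bbf]

lemma bbf_zero (tstar : ℕ) (p : ℝ) (m : ℕ) : bbf tstar p m 0 = (1-p)^m := by
  simp [bbf]

lemma bbf_succ (tstar : ℕ) (p : ℝ) (m y : ℕ) :
    bbf tstar p (m+1) (y+1)
      = (1-p) * bbf tstar p m (y+1)
        + (if tstar ≤ m then p * bbf tstar p (m - tstar) y else 0) := by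
  have hA : (tstar+1)*(y+1) = (tstar+1)*y + tstar + 1 := by ring
  have hB : tstar*(y+1) = tstar*y + tstar := by ring
  have hC : (tstar+1)*y = tstar*y + y := by ring
  have hD : (tstar+1)*(y+1) = tstar*(y+1) + (y+1) := by ring
  by_cases h : (tstar+1)*(y+1) ≤ m+1
  · have ht : tstar ≤ m := by omega
    have hx : tstar*(y+1) ≤ m := by omega
    have hind2 : (tstar+1)*y ≤ m - tstar := by omega
    rw [if_pos ht]
    unfold bbf
    rw [if_pos h, if_pos hind2]
    have hch : ((m+1) - tstar*(y+1)).choose (y+1)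
        = (m - tstar*(y+1)).choose y + (m - tstar*(y+1)).choose (y+1) := by
      have e1 : (m+1) - tstar*(y+1) = (m - tstar*(y+1)) + 1 := by omega
      rw [e1, Nat.choose_succ_succ]
    have e2 : m - tstar - tstar*y = m - tstar*(y+1) := by omega
    have e3 : (m - tstar) - (tstar+1)*y = (m+1) - (tstar+1)*(y+1) := by omega
    by_cases h2 : (tstar+1)*(y+1) ≤ m
    · rw [if_pos h2]
      have e4 : (m+1) - (tstar+1)*(y+1) = (m - (tstar+1)*(y+1)) + 1 := by omega
      rw [hch, e2, e3, e4]
      push_cast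
      ring
    · rw [if_neg h2]
      -- here (tstar+1)*(y+1) = m+1, so the first Pascal term choose (y+1) vanishes
      have hm : m - tstar*(y+1) = y := by omega
      rw [hch, hm, e2, e3, hm]
      rw [Nat.choose_succ_self]
      push_cast
      ring
  · -- everything is zero
    have h1 : ¬ (tstar+1)*(y+1) ≤ m := by omega
    unfold bbf
    rw [if_neg h]
    rw [if_neg h1]
    by_cases ht : tstar ≤ m
    · have h2 : ¬ (tstar+1)*y ≤ m - tstar := by omega
      rw [if_pos ht, if_neg h2]
      ring
    · rw [if_neg ht]
      ring


lemma bb_succ (tstar : ℕ) (p : ℝ) (m : ℕ) :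
    bb tstar p (m+1) = (1-p) * bb tstar p m
      + (if tstar ≤ m then p * bb tstar p (m - tstar) else 0) := by
  have hlast : bbf tstar p m (m+1) = 0 := by
    unfold bbf
    rw [if_neg (by nlinarith [Nat.le_mul_of_pos_left (m+1) (Nat.succ_pos tstar)] : ¬ (tstar+1)*(m+1) ≤ m)]
  have hsum1 : ∑ y ∈ Finset.range (m+1), bbf tstar p m (y+1)
      = bb tstar p m - bbf tstar p m 0 := by
    have h := Finset.sum_range_succ' (bbf tstar p m) (m+1)
    have h2 : (∑ x ∈ Finset.range (m+1+1), bbf tstar p m x) = bb tstar p m := by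
      rw [Finset.sum_range_succ (bbf tstar p m) (m+1), hlast, add_zero]
      rfl
    rw [h2] at h
    linarith
  have hsum2 : (tstar ≤ m) → ∑ y ∈ Finset.range (m+1), bbf tstar p (m - tstar) y
      = bb tstar p (m - tstar) := by
    intro ht
    unfold bb
    refine (Finset.sum_subset (Finset.range_subset_range.mpr (by omega)) ?_).symm
    intro x _ hx
    rw [Finset.mem_range, not_lt] at hx
    unfold bbf
    rw [if_neg (by nlinarith [Nat.le_mul_of_pos_left x (Nat.succ_pos tstar)] : ¬ (tstar+1)*x ≤ m - tstar)]
  have lhs : bb tstar p (m+1)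
      = ∑ y ∈ Finset.range (m+1), bbf tstar p (m+1) (y+1) + bbf tstar p (m+1) 0 :=
    Finset.sum_range_succ' (bbf tstar p (m+1)) (m+1)
  have : ∑ y ∈ Finset.range (m+1), bbf tstar p (m+1) (y+1)
      = (1-p) * (∑ y ∈ Finset.range (m+1), bbf tstar p m (y+1))
        + (if tstar ≤ m then p * ∑ y ∈ Finset.range (m+1), bbf tstar p (m-tstar) y else 0) := by
    rw [Finset.mul_sum]
    by_cases ht : tstar ≤ m
    · simp only [if_pos ht, Finset.mul_sum, ← Finset.sum_add_distrib]
      exact Finset.sum_congr rfl fun y _ => by rw [bbf_succ, if_pos ht]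
    · simp only [if_neg ht, add_zero]
      exact (Finset.sum_congr rfl fun y _ => by rw [bbf_succ, if_neg ht, add_zero])
  rw [lhs, this, hsum1, bbf_zero, bbf_zero]
  by_cases ht : tstar ≤ m
  · rw [if_pos ht, if_pos ht, hsum2 ht, pow_succ]
    ring
  · rw [if_neg ht, if_neg ht, pow_succ]
    ring

lemma bb_small (tstar : ℕ) (p : ℝ) : ∀ j, j ≤ tstar → bb tstar p j = (1-p)^j := by
  intro j
  induction j with
  | zero => intro _; simpa using bb_zero tstar p
  | succ n ih =>
    intro hn
    rw [bb_succ, if_neg (by omega), add_zero, ih (by omega), pow_succ]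
    ring

lemma bb_inv (tstar : ℕ) (p : ℝ) (hp0 : 0 < p) (hp1 : p < 1) (s : ℕ) :
    bb tstar p (s + tstar) + p * ∑ j ∈ Finset.range tstar, bb tstar p (s + j) = 1 := by
  induction s with
  | zero =>
    have hgeo : ∑ j ∈ Finset.range tstar, bb tstar p (0 + j)
        = ((1-p)^tstar - 1) / ((1-p) - 1) := by
      rw [← geom_sum_eq (by intro h; nlinarith [h] : (1:ℝ)-p ≠ 1)]
      exact Finset.sum_congr rfl fun j hj => by
        rw [zero_add, bb_small tstar p j (by simpa using Nat.le_of_lt_succ (Nat.lt_succ_of_lt (Finset.mem_range.mp hj)))]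
    rw [zero_add, bb_small tstar p tstar le_rfl, hgeo]
    have hp : p ≠ 0 := ne_of_gt hp0
    have hd : (1:ℝ) - p - 1 = -p := by ring
    rw [hd]
    have h5 : p * ((((1:ℝ)-p)^tstar - 1) / -p) = -(((1:ℝ)-p)^tstar - 1) := by
      rw [mul_div_assoc', div_neg, mul_div_cancel_left₀ _ hp]
    rw [h5]
    ring
  | succ s ih =>
    have hrec : bb tstar p (s + 1 + tstar) = (1-p) * bb tstar p (s + tstar) + p * bb tstar p s := by
      have := bb_succ tstar p (s + tstar)
      rw [if_pos (by omega)] at this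
      have e1 : s + tstar + 1 = s + 1 + tstar := by omega
      have e2 : s + tstar - tstar = s := by omega
      rw [e1, e2] at this
      exact this
    have hshift : ∑ j ∈ Finset.range tstar, bb tstar p (s + 1 + j)
        = ∑ j ∈ Finset.range tstar, bb tstar p (s + j) + bb tstar p (s + tstar) - bb tstar p s := by
      have h1 := Finset.sum_range_succ' (fun j => bb tstar p (s + j)) tstar
      have h2 := Finset.sum_range_succ (fun j => bb tstar p (s + j)) tstar
      have h4 : ∑ j ∈ Finset.range tstar, bb tstar p (s + (j+1))
          = ∑ j ∈ Finset.range tstar, bb tstar p (s + 1 + j) :=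
        Finset.sum_congr rfl fun j _ => by rw [show s+(j+1) = s+1+j by omega]
      simp only [add_zero] at h1
      rw [h2, h4] at h1
      linarith
    rw [hrec, hshift]
    linarith

noncomputable def Mw (tstar : ℕ) (E : ℕ → ℝ) (s : ℕ) : ℝ :=
  (Finset.range (tstar+1)).sup' Finset.nonempty_range_add_one (fun j => E (s+j))

lemma ub (tstar : ℕ) (p : ℝ) (E : ℕ → ℝ) (hp0 : 0 < p) (hp1 : p < 1)
    (hrec : ∀ x, E (x + (tstar+1)) = (1-p) * E (x + tstar) + p * E x)
    (s : ℕ) : ∀ r, E (s + r) ≤ Mw tstar E s := by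
  intro r
  induction r using Nat.strong_induction_on with
  | _ r ih =>
    by_cases hr : r ≤ tstar
    · exact Finset.le_sup' (fun j => E (s+j)) (Finset.mem_range.mpr (by omega : r < tstar+1))
    · have hER : E (s + r) = (1-p) * E (s + (r-1)) + p * E (s + (r - (tstar+1))) := by
        have h := hrec (s + (r - (tstar+1)))
        have e1 : s + (r - (tstar+1)) + (tstar+1) = s + r := by omega
        have e2 : s + (r - (tstar+1)) + tstar = s + (r-1) := by omega
        rw [e1, e2] at h
        exact h
      rw [hER]
      have i1 := ih (r-1) (by omega)
      have i2 := ih (r - (tstar+1)) (by omega)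
      nlinarith

lemma Mw_nonneg (tstar : ℕ) (p : ℝ) (E : ℕ → ℝ) (hp0 : 0 < p)
    (hinv : ∀ s, E (s + tstar) + p * ∑ j ∈ Finset.range tstar, E (s + j) = 0)
    (s : ℕ) : 0 ≤ Mw tstar E s := by
  have h0 := hinv s
  have hM1 : E (s + tstar) ≤ Mw tstar E s :=
    Finset.le_sup' (fun j => E (s+j)) (Finset.mem_range.mpr (by omega : tstar < tstar+1))
  have hsum : ∑ j ∈ Finset.range tstar, E (s + j) ≤ (tstar : ℝ) * Mw tstar E s := by
    have := Finset.sum_le_card_nsmul (Finset.range tstar) (fun j => E (s+j)) (Mw tstar E s)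
      (fun j hj => Finset.le_sup' (fun j => E (s+j)) (Finset.mem_range.mpr (by
        have := Finset.mem_range.mp hj; omega : j < tstar+1)))
    simpa [Finset.card_range, nsmul_eq_mul] using this
  nlinarith [mul_le_mul_of_nonneg_left hsum hp0.le, Nat.cast_nonneg (α := ℝ) tstar,
    mul_nonneg hp0.le (Nat.cast_nonneg (α := ℝ) tstar)]

lemma decay (tstar : ℕ) (p : ℝ) (E : ℕ → ℝ) (hp0 : 0 < p) (hp1 : p < 1)
    (hrec : ∀ x, E (x + (tstar+1)) = (1-p) * E (x + tstar) + p * E x)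
    (s i : ℕ) (hi : i ≤ tstar) (IV : ℝ) (hIv : E (s+i) = IV) (hIM : IV ≤ Mw tstar E s) :
    ∀ r, E (s + i + (tstar+1) + r) ≤ Mw tstar E s - p * (1-p)^r * (Mw tstar E s - IV) := by
  have hub := ub tstar p E hp0 hp1 hrec s
  intro r
  induction r with
  | zero =>
    have h := hrec (s + i)
    rw [show s + i + tstar = s + (i + tstar) from by omega] at h
    have h1 := hub (i + tstar)
    rw [show s + i + (tstar+1) + 0 = s + i + (tstar+1) from by omega, h, hIv]
    nlinarith
  | succ r ihr =>
    have h := hrec (s + i + r + 1)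
    rw [show s + i + r + 1 + (tstar+1) = s + i + (tstar+1) + (r+1) from by omega,
        show s + i + r + 1 + tstar = s + i + (tstar+1) + r from by omega] at h
    have h1 := hub (i + r + 1)
    rw [show s + (i + r + 1) = s + i + r + 1 from by omega] at h1
    rw [h, pow_succ]
    nlinarith [pow_nonneg (by linarith : (0:ℝ) ≤ 1-p) r]

lemma contract (tstar : ℕ) (p : ℝ) (E : ℕ → ℝ) (hp0 : 0 < p) (hp1 : p < 1)
    (hrec : ∀ x, E (x + (tstar+1)) = (1-p) * E (x + tstar) + p * E x)
    (hinv : ∀ s, E (s + tstar) + p * ∑ j ∈ Finset.range tstar, E (s + j) = 0)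
    (s : ℕ) :
    Mw tstar E (s + 2*(tstar+1)) ≤ Mw tstar E s
      - (p * (1-p)^(2*(tstar+1))) * (Mw tstar E s + Mw tstar (fun m => -E m) s) := by
  obtain ⟨i, hi, hieq⟩ := Finset.exists_mem_eq_sup' (Finset.nonempty_range_add_one (n := tstar))
      (fun j => -E (s+j))
  have hi' : i ≤ tstar := by have := Finset.mem_range.mp hi; omega
  set IV : ℝ := -(Mw tstar (fun m => -E m) s) with hIVdef
  have hIv : E (s+i) = IV := by
    have : Mw tstar (fun m => -E m) s = -E (s+i) := hieq
    rw [hIVdef, this]; ring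
  have hIM : IV ≤ Mw tstar E s := by
    rw [← hIv]; exact ub tstar p E hp0 hp1 hrec s i
  have hdec := decay tstar p E hp0 hp1 hrec s i hi' IV hIv hIM
  have hMI : 0 ≤ Mw tstar E s - IV := by linarith
  apply Finset.sup'_le
  intro j hj
  have hj' : j ≤ tstar := by have := Finset.mem_range.mp hj; omega
  have hidx : s + 2*(tstar+1) + j = s + i + (tstar+1) + ((tstar+1) + j - i) := by omega
  rw [hidx]
  have hd := hdec ((tstar+1) + j - i)
  have hq : (1-p)^(2*(tstar+1)) ≤ (1-p)^((tstar+1) + j - i) :=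
    pow_le_pow_of_le_one (by linarith) (by linarith) (by omega)
  have key : p * (1-p)^(2*(tstar+1)) * (Mw tstar E s - IV)
      ≤ p * (1-p)^((tstar+1) + j - i) * (Mw tstar E s - IV) :=
    mul_le_mul_of_nonneg_right (mul_le_mul_of_nonneg_left hq hp0.le) hMI
  have hMM : Mw tstar E s + Mw tstar (fun m => -E m) s = Mw tstar E s - IV := by
    rw [hIVdef]; ring
  rw [hMM]
  linarith [hd]


noncomputable def ee (tstar : ℕ) (p : ℝ) (m : ℕ) : ℝ :=
  bb tstar p m - 1/(1 + tstar*p)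

lemma ee_rec (tstar : ℕ) (p : ℝ) :
    ∀ x, ee tstar p (x + (tstar+1)) = (1-p) * ee tstar p (x + tstar) + p * ee tstar p x := by
  intro x
  unfold ee
  have h := bb_succ tstar p (x + tstar)
  rw [if_pos (by omega), show x + tstar - tstar = x from by omega,
      show x + tstar + 1 = x + (tstar+1) from by omega] at h
  rw [h]
  ring

lemma ee_inv (tstar : ℕ) (p : ℝ) (hp0 : 0 < p) (hp1 : p < 1) :
    ∀ s, ee tstar p (s + tstar) + p * ∑ j ∈ Finset.range tstar, ee tstar p (s + j) = 0 := by
  intro s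
  have h := bb_inv tstar p hp0 hp1 s
  have hden : (1 : ℝ) + tstar * p ≠ 0 := by positivity
  have hsum : ∑ j ∈ Finset.range tstar, ee tstar p (s + j)
      = ∑ j ∈ Finset.range tstar, bb tstar p (s + j) - tstar * (1/(1 + tstar*p)) := by
    unfold ee
    rw [Finset.sum_sub_distrib, Finset.sum_const, Finset.card_range, nsmul_eq_mul]
  rw [hsum]
  unfold ee
  field_simp
  have h' : (bb tstar p (s + tstar) + p * ∑ j ∈ Finset.range tstar, bb tstar p (s + j))
      * (1 + tstar*p) = 1 * (1 + tstar*p) := by rw [h]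
  nlinarith [h']

lemma neg_ee_rec (tstar : ℕ) (p : ℝ) :
    ∀ x, (fun m => -ee tstar p m) (x + (tstar+1))
      = (1-p) * (fun m => -ee tstar p m) (x + tstar) + p * (fun m => -ee tstar p m) x := by
  intro x
  simp only
  rw [ee_rec]
  ring

lemma neg_ee_inv (tstar : ℕ) (p : ℝ) (hp0 : 0 < p) (hp1 : p < 1) :
    ∀ s, (fun m => -ee tstar p m) (s + tstar)
      + p * ∑ j ∈ Finset.range tstar, (fun m => -ee tstar p m) (s + j) = 0 := by
  intro s
  simp only
  have h := ee_inv tstar p hp0 hp1 s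
  rw [Finset.sum_neg_distrib]
  linarith

noncomputable def DD (tstar : ℕ) (p : ℝ) (s : ℕ) : ℝ :=
  Mw tstar (ee tstar p) s + Mw tstar (fun m => -ee tstar p m) s

lemma habs (tstar : ℕ) (p : ℝ) (hp0 : 0 < p) (hp1 : p < 1) (s r : ℕ) :
    |ee tstar p (s + r)| ≤ DD tstar p s := by
  have h1 := ub tstar p (ee tstar p) hp0 hp1 (ee_rec tstar p) s r
  have h2 := ub tstar p (fun m => -ee tstar p m) hp0 hp1 (neg_ee_rec tstar p) s r
  have h3 := Mw_nonneg tstar p (ee tstar p) hp0 (ee_inv tstar p hp0 hp1) s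
  have h4 := Mw_nonneg tstar p (fun m => -ee tstar p m) hp0 (neg_ee_inv tstar p hp0 hp1) s
  rw [abs_le]
  unfold DD
  constructor <;> linarith

lemma hDD (tstar : ℕ) (p : ℝ) (hp0 : 0 < p) (hp1 : p < 1) (s : ℕ) :
    DD tstar p (s + 2*(tstar+1))
      ≤ (1 - 2 * (p * (1-p)^(2*(tstar+1)))) * DD tstar p s := by
  have h1 := contract tstar p (ee tstar p) hp0 hp1 (ee_rec tstar p) (ee_inv tstar p hp0 hp1) s
  have h2 := contract tstar p (fun m => -ee tstar p m) hp0 hp1 (neg_ee_rec tstar p)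
    (neg_ee_inv tstar p hp0 hp1) s
  have hnn : Mw tstar (fun m => -(fun m' => -ee tstar p m') m) s = Mw tstar (ee tstar p) s := by
    unfold Mw
    congr 1
    funext j
    simp
  rw [hnn] at h2
  unfold DD
  linarith


lemma bb_tendsto (tstar : ℕ) (p : ℝ) (hp0 : 0 < p) (hp1 : p < 1) :
    Tendsto (fun m => bb tstar p m) atTop (nhds (1/(1 + tstar*p))) := by
  set δ : ℝ := p * (1-p)^(2*(tstar+1)) with hδdef
  have hq0 : (0:ℝ) ≤ 1 - p := by linarith
  have hq1 : (1:ℝ) - p ≤ 1 := by linarith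
  have hδ0 : 0 < δ := by
    have : (0:ℝ) < 1 - p := by linarith
    positivity
  have hδ4 : δ ≤ 1/4 := by
    have h1 : (1-p)^(2*(tstar+1)) ≤ 1-p := pow_le_of_le_one hq0 hq1 (by omega)
    have h2 : p * (1-p) ≤ 1/4 := by nlinarith [sq_nonneg (2*p - 1)]
    calc δ ≤ p * (1-p) := by
            exact mul_le_mul_of_nonneg_left h1 hp0.le
      _ ≤ 1/4 := h2
  have hDD0 : 0 ≤ DD tstar p 0 := le_trans (abs_nonneg _) (habs tstar p hp0 hp1 0 0)
  have hgeo0 : (0:ℝ) ≤ 1 - 2*δ := by linarith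
  have hgeo1 : 1 - 2*δ < 1 := by linarith
  have hDDn : ∀ n, DD tstar p (2*(tstar+1)*n) ≤ (1 - 2*δ)^n * DD tstar p 0 := by
    intro n
    induction n with
    | zero => simp
    | succ n ih =>
      have he : 2*(tstar+1)*(n+1) = 2*(tstar+1)*n + 2*(tstar+1) := by ring
      rw [he, pow_succ]
      calc DD tstar p (2*(tstar+1)*n + 2*(tstar+1))
          ≤ (1 - 2*δ) * DD tstar p (2*(tstar+1)*n) := hDD tstar p hp0 hp1 _
        _ ≤ (1 - 2*δ) * ((1 - 2*δ)^n * DD tstar p 0) :=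
            mul_le_mul_of_nonneg_left ih hgeo0
        _ = (1 - 2*δ)^n * (1 - 2*δ) * DD tstar p 0 := by ring
  have hbound : ∀ m, |ee tstar p m| ≤ (1 - 2*δ)^(m / (2*(tstar+1))) * DD tstar p 0 := by
    intro m
    have hs : 2*(tstar+1)*(m / (2*(tstar+1))) ≤ m := by
      have h := Nat.div_mul_le_self m (2*(tstar+1))
      have h2 : 2*(tstar+1)*(m / (2*(tstar+1))) = m / (2*(tstar+1)) * (2*(tstar+1)) :=
        Nat.mul_comm _ _
      omega
    have h1 := habs tstar p hp0 hp1 (2*(tstar+1)*(m / (2*(tstar+1))))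
      (m - 2*(tstar+1)*(m / (2*(tstar+1))))
    rw [show 2*(tstar+1)*(m / (2*(tstar+1))) + (m - 2*(tstar+1)*(m / (2*(tstar+1)))) = m
        from by omega] at h1
    exact le_trans h1 (hDDn _)
  have hdiv : Tendsto (fun m : ℕ => m / (2*(tstar+1))) atTop atTop := by
    apply tendsto_atTop_atTop.mpr
    intro b
    exact ⟨b*(2*(tstar+1)), fun m hm => (Nat.le_div_iff_mul_le (by omega)).mpr hm⟩
  have hg : Tendsto (fun m : ℕ => (1 - 2*δ)^(m / (2*(tstar+1))) * DD tstar p 0)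
      atTop (nhds 0) := by
    have h1 := (tendsto_pow_atTop_nhds_zero_of_lt_one hgeo0 hgeo1).mul_const (DD tstar p 0)
    rw [zero_mul] at h1
    exact h1.comp hdiv
  have hee : Tendsto (fun m => ee tstar p m) atTop (nhds 0) :=
    squeeze_zero_norm (fun m => by simpa [Real.norm_eq_abs] using hbound m) hg
  have := hee.add_const (1/(1 + (tstar:ℝ)*p))
  rw [zero_add] at this
  refine this.congr fun m => ?_
  simp [ee]


lemma main_eq (tstar : ℕ) (p : ℝ) (t : ℕ) (ht : tstar + 1 ≤ t) :
    ∑ x ∈ Finset.range ((t - 1) / (tstar + 1) + 1),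
          ∑ k ∈ Finset.Icc 1 (tstar + 1),
            ((t - k - x * tstar).choose x : ℝ)
              * (if k + x * (tstar + 1) ≤ t then (1 : ℝ) else 0)
              * p ^ (x + 1) * (1 - p) ^ (t - k - (tstar + 1) * x)
      = p * ∑ k ∈ Finset.Icc 1 (tstar + 1), bb tstar p (t - k) := by
  rw [Finset.sum_comm, Finset.mul_sum]
  refine Finset.sum_congr rfl fun k hk => ?_
  obtain ⟨hk1, hk2⟩ := Finset.mem_Icc.mp hk
  have hkt : k ≤ t := le_trans hk2 ht
  have step1 : ∑ x ∈ Finset.range ((t - 1) / (tstar + 1) + 1),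
        ((t - k - x * tstar).choose x : ℝ)
          * (if k + x * (tstar + 1) ≤ t then (1 : ℝ) else 0)
          * p ^ (x + 1) * (1 - p) ^ (t - k - (tstar + 1) * x)
      = ∑ x ∈ Finset.range (t + 1),
        ((t - k - x * tstar).choose x : ℝ)
          * (if k + x * (tstar + 1) ≤ t then (1 : ℝ) else 0)
          * p ^ (x + 1) * (1 - p) ^ (t - k - (tstar + 1) * x) := by
    apply Finset.sum_subset
    · apply Finset.range_subset_range.mpr
      have := Nat.div_le_self (t-1) (tstar+1)
      omega
    · intro x _ hx
      rw [Finset.mem_range, not_lt] at hx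
      have hnind : ¬ (k + x * (tstar + 1) ≤ t) := by
        intro hc
        have hx2 : x * (tstar+1) ≤ t - 1 := by omega
        have : x ≤ (t-1) / (tstar+1) := (Nat.le_div_iff_mul_le (by omega)).mpr hx2
        omega
      rw [if_neg hnind]
      ring
  have step2 : ∀ x, ((t - k - x * tstar).choose x : ℝ)
          * (if k + x * (tstar + 1) ≤ t then (1 : ℝ) else 0)
          * p ^ (x + 1) * (1 - p) ^ (t - k - (tstar + 1) * x)
      = p * bbf tstar p (t - k) x := by
    intro x
    unfold bbf
    by_cases hind : k + x * (tstar + 1) ≤ t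
    · have hind2 : (tstar+1)*x ≤ t - k := by
        have : x * (tstar+1) = (tstar+1) * x := Nat.mul_comm _ _
        omega
      rw [if_pos hind, if_pos hind2]
      have e1 : t - k - x * tstar = t - k - tstar * x := by
        rw [Nat.mul_comm]
      rw [e1, pow_succ]
      ring
    · have hind2 : ¬ ((tstar+1)*x ≤ t - k) := by
        intro hc
        have : x * (tstar+1) = (tstar+1) * x := Nat.mul_comm _ _
        omega
      rw [if_neg hind, if_neg hind2]
      ring
  rw [step1]
  have step3 : ∑ x ∈ Finset.range (t + 1), p * bbf tstar p (t - k) x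
      = p * bb tstar p (t - k) := by
    rw [← Finset.mul_sum]
    congr 1
    unfold bb
    refine (Finset.sum_subset (Finset.range_subset_range.mpr (by omega)) ?_).symm
    intro x _ hx
    rw [Finset.mem_range, not_lt] at hx
    unfold bbf
    rw [if_neg (by nlinarith [Nat.le_mul_of_pos_left x (Nat.succ_pos tstar)] : ¬ (tstar+1)*x ≤ t - k)]
  rw [← step3]
  exact Finset.sum_congr rfl fun x _ => step2 x

theorem stmt_4 (tstar : ℕ) (p : ℝ) (hp0 : 0 < p) (hp1 : p < 1) :
    Tendsto (fun t : ℕ =>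
        ∑ x ∈ Finset.range ((t - 1) / (tstar + 1) + 1),
          ∑ k ∈ Finset.Icc 1 (tstar + 1),
            ((t - k - x * tstar).choose x : ℝ)
              * (if k + x * (tstar + 1) ≤ t then (1 : ℝ) else 0)
              * p ^ (x + 1) * (1 - p) ^ (t - k - (tstar + 1) * x))
      atTop (nhds (((tstar : ℝ) + 1) * p / (1 + (tstar : ℝ) * p))) := by
  have hden : (1:ℝ) + (tstar:ℝ) * p ≠ 0 := by positivity
  have hlim : Tendsto (fun t : ℕ => p * ∑ k ∈ Finset.Icc 1 (tstar + 1), bb tstar p (t - k))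
      atTop (nhds (((tstar : ℝ) + 1) * p / (1 + (tstar : ℝ) * p))) := by
    have h1 : Tendsto (fun t : ℕ => ∑ k ∈ Finset.Icc 1 (tstar + 1), bb tstar p (t - k))
        atTop (nhds (∑ _k ∈ Finset.Icc 1 (tstar + 1), 1/(1 + (tstar:ℝ)*p))) := by
      apply tendsto_finset_sum
      intro k _
      exact (bb_tendsto tstar p hp0 hp1).comp (tendsto_sub_atTop_nat k)
    have h2 := h1.const_mul p
    have h3 : p * ∑ _k ∈ Finset.Icc 1 (tstar + 1), 1/(1 + (tstar:ℝ)*p)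
        = ((tstar : ℝ) + 1) * p / (1 + (tstar : ℝ) * p) := by
      rw [Finset.sum_const, Nat.card_Icc, nsmul_eq_mul]
      push_cast
      field_simp
    rw [h3] at h2
    exact h2
  refine hlim.congr' ?_
  filter_upwards [eventually_ge_atTop (tstar + 1)] with t ht
  exact (main_eq tstar p t ht).symm
end

section
/- Fix an integer t⋆ ≥ 0 and p ∈ (0,1). Define c(t) := ∑_{x=0}^{⌊(t−1)/(t⋆+1)⌋} C(t−1−x·t⋆, x) · p^x · (1−p)^{t−(t⋆+1)x}. Then c(t) → (1−p)/(1 + t⋆·p) as t → ∞. -/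
open Finset Filter

noncomputable def G (k : ℕ) (p q : ℝ) : ℕ → ℝ
  | 0 => 1
  | n + 1 => q * G k p q n + if k ≤ n then p * G k p q (n - k) else 0
termination_by n => n
decreasing_by all_goals omega

lemma G_zero (k : ℕ) (p q : ℝ) : G k p q 0 = 1 := by rw [G]

lemma G_succ (k : ℕ) (p q : ℝ) (n : ℕ) :
    G k p q (n + 1) = q * G k p q n + if k ≤ n then p * G k p q (n - k) else 0 := by
  rw [G]

lemma G_succ_ge (k : ℕ) (p q : ℝ) (n : ℕ) (h : k ≤ n) :
    G k p q (n + 1) = q * G k p q n + p * G k p q (n - k) := by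
  rw [G_succ, if_pos h]

lemma G_succ_lt (k : ℕ) (p q : ℝ) (n : ℕ) (h : n < k) :
    G k p q (n + 1) = q * G k p q n := by
  rw [G_succ, if_neg (by omega), add_zero]

lemma G_pow (k : ℕ) (p q : ℝ) (n : ℕ) (h : n ≤ k) : G k p q n = q ^ n := by
  induction n with
  | zero => simp [G_zero]
  | succ m ih => rw [G_succ_lt k p q m (by omega), ih (by omega), pow_succ]; ring

lemma G_formula (k : ℕ) (p q : ℝ) : ∀ n : ℕ,
    G k p q n = ∑ x ∈ range (n / (k+1) + 1),
      ((n - x*k).choose x : ℝ) * p^x * q^(n - (k+1)*x) := by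
  intro n
  induction n using Nat.strong_induction_on with
  | _ n ih =>
    match n with
    | 0 => simp [G_zero]
    | Nat.succ n =>
      by_cases hnk : n < k
      · have h1 : (n + 1) / (k + 1) = 0 := Nat.div_eq_of_lt (by omega)
        rw [G_succ_lt k p q n hnk, ih n (by omega), h1]
        have h2 : n / (k + 1) = 0 := Nat.div_eq_of_lt (by omega)
        rw [h2]
        simp [pow_succ, mul_comm]
      · push_neg at hnk
        -- k ≤ n case
        rw [G_succ_ge k p q n hnk, ih n (by omega), ih (n - k) (by omega)]
        set X : ℕ := (n + 1) / (k + 1) with hX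
        have hY : (n - k) / (k + 1) + 1 = X := by
          rw [hX, ← Nat.add_div_right (n - k) (Nat.succ_pos k)]
          congr 1
          omega
        have hXle : ∀ y, y < X → (y + 1) * (k + 1) ≤ n + 1 := by
          intro y hy
          have : y + 1 ≤ X := hy
          rw [hX, Nat.le_div_iff_mul_le (Nat.succ_pos k)] at this
          exact this
        simp only [Nat.succ_eq_add_one]
        have step1 : (∑ x ∈ range (X + 1), ((n+1 - x*k).choose x : ℝ) * p^x * q^(n+1-(k+1)*x))
            = (∑ y ∈ range X, ((n+1-(y+1)*k).choose (y+1) : ℝ) * p^(y+1) * q^(n+1-(k+1)*(y+1)))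
              + q^(n+1) := by
          rw [Finset.sum_range_succ']
          simp
        have hsplit : ∀ y ∈ range X,
            ((n + 1 - (y+1)*k).choose (y+1) : ℝ) * p^(y+1) * q^(n+1-(k+1)*(y+1))
            = ((n - (y+1)*k).choose (y+1) : ℝ) * p^(y+1) * q^(n+1-(k+1)*(y+1))
              + ((n - k - y*k).choose y : ℝ) * p^(y+1) * q^(n - k - (k+1)*y) := by
          intro y hy
          have hy' : (y + 1) * (k + 1) ≤ n + 1 := hXle y (mem_range.mp hy)
          have hm : (y+1)*(k+1) = (y+1)*k + (y+1) := by ring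
          have hk1 : (y+1)*k ≤ n := by omega
          have e1 : n + 1 - (y+1)*k = (n - (y+1)*k) + 1 := by omega
          have e2 : n - (y+1)*k = n - k - y*k := by
            have : (y+1)*k = y*k + k := by ring
            omega
          have e3 : n + 1 - (k+1)*(y+1) = n - k - (k+1)*y := by
            have h4 : (k+1)*(y+1) = (k+1)*y + (k+1) := by ring
            have h5 : (y+1)*(k+1) = (k+1)*(y+1) := by ring
            omega
          rw [e1, Nat.choose_succ_succ', e2, e3]
          push_cast
          ring
        have hB : ∑ y ∈ range X, ((n - k - y*k).choose y : ℝ) * p^(y+1) * q^(n - k - (k+1)*y)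
            = p * ∑ y ∈ range ((n-k)/(k+1) + 1),
                ((n - k - y*k).choose y : ℝ) * p^y * q^(n - k - (k+1)*y) := by
          rw [hY, Finset.mul_sum]
          exact Finset.sum_congr rfl (by intro y _; ring)
        -- first sum is q * F n - q^(n+1)
        have hA : (∑ y ∈ range X, ((n - (y+1)*k).choose (y+1) : ℝ) * p^(y+1) * q^(n+1-(k+1)*(y+1)))
              + q^(n+1)
            = q * ∑ x ∈ range (n/(k+1) + 1), ((n - x*k).choose x : ℝ) * p^x * q^(n-(k+1)*x) := by
          have hX' : n / (k+1) = X ∨ n / (k+1) + 1 = X := by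
            have h1 : n / (k+1) ≤ X := Nat.div_le_div_right (by omega)
            have h2 : X ≤ n / (k+1) + 1 := by
              rw [hX, ← Nat.add_div_right n (Nat.succ_pos k)]
              exact Nat.div_le_div_right (by omega)
            omega
          have hterm : ∀ x, x ≤ n / (k+1) →
              q * (((n - x*k).choose x : ℝ) * p^x * q^(n-(k+1)*x))
              = ((n - x*k).choose x : ℝ) * p^x * q^(n+1-(k+1)*x) := by
            intro x hx
            have hx' : x * (k+1) ≤ n := (Nat.le_div_iff_mul_le (Nat.succ_pos k)).mp hx
            have : (k+1)*x ≤ n := by rw [mul_comm]; exact hx'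
            have e : n + 1 - (k+1)*x = (n - (k+1)*x) + 1 := by omega
            rw [e, pow_succ]
            ring
          rw [Finset.mul_sum, Finset.sum_congr rfl (fun x hx => hterm x (by
            have := mem_range.mp hx; omega))]
          rw [Finset.sum_range_succ']
          simp only [Nat.sub_zero, Nat.zero_mul, Nat.mul_zero, Nat.choose_zero_right,
            pow_zero, Nat.cast_one, one_mul, mul_one]
          rcases hX' with h | h
          · rw [h]
          · rw [← h, Finset.sum_range_succ]
            have hz : ((n - (n/(k+1) + 1)*k).choose (n/(k+1) + 1) : ℝ) = 0 := by
              have hXX : X * (k+1) ≤ n + 1 := by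
                rw [hX]; exact Nat.div_mul_le_self _ _
              have hgt : n < X * (k + 1) := by
                by_contra hc
                push_neg at hc
                have : X ≤ n / (k+1) := (Nat.le_div_iff_mul_le (Nat.succ_pos k)).mpr hc
                omega
              have heq : X * (k+1) = n + 1 := by omega
              have hX1 : 1 ≤ X := by
                rw [hX]
                exact (Nat.one_le_div_iff (by omega)).mpr (by omega)
              have hlt : n - X * k < X := by
                have hexp : X * (k+1) = X*k + X := by ring
                omega
              rw [h]
              rw [Nat.choose_eq_zero_of_lt hlt, Nat.cast_zero]
            rw [hz]
            ring
        rw [step1, Finset.sum_congr rfl hsplit, Finset.sum_add_distrib, hB, ← hA]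
        ring

section Bounds
variable {k : ℕ} {p q : ℝ} (hp : 0 ≤ p) (hq : 0 ≤ q) (hpq : p + q = 1)

include hp hq in
lemma G_nonneg : ∀ n, 0 ≤ G k p q n := by
  intro n
  induction n using Nat.strong_induction_on with
  | _ n ih =>
    match n with
    | 0 => rw [G_zero]; norm_num
    | Nat.succ n =>
      rw [G_succ]
      have h1 : 0 ≤ q * G k p q n := mul_nonneg hq (ih n (by omega))
      split
      · exact add_nonneg h1 (mul_nonneg hp (ih (n - k) (by omega)))
      · simpa using h1

include hp hq hpq in
lemma G_le_one : ∀ n, G k p q n ≤ 1 := by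
  intro n
  induction n using Nat.strong_induction_on with
  | _ n ih =>
    match n with
    | 0 => rw [G_zero]
    | Nat.succ n =>
      rw [G_succ]
      have h1 : q * G k p q n ≤ q := by
        nlinarith [ih n (by omega)]
      split
      · have h2 : p * G k p q (n - k) ≤ p := by
          nlinarith [ih (n - k) (by omega)]
        linarith
      · linarith

include hpq in
lemma G_window (n : ℕ) :
    G k p q (n + k) + p * ∑ i ∈ range k, G k p q (n + i) = 1 := by
  induction n with
  | zero =>
    simp only [Nat.zero_add]
    have hGk : ∀ i, i ≤ k → G k p q i = q ^ i := G_pow k p q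
    rw [hGk k le_rfl, Finset.sum_congr rfl (fun i hi => hGk i (le_of_lt (mem_range.mp hi)))]
    by_cases hq1 : q = 1
    · have hp0 : p = 0 := by linarith
      simp [hq1, hp0]
    · rw [geom_sum_eq hq1]
      have hq1' : q - 1 ≠ 0 := fun h => hq1 (by linarith)
      field_simp
      linear_combination (q ^ k - 1) * hpq
  | succ n ih =>
    have hrec : G k p q (n + k + 1) = q * G k p q (n + k) + p * G k p q n := by
      rw [G_succ_ge k p q (n + k) (by omega), Nat.add_sub_cancel]
    have hsum : ∑ i ∈ range k, G k p q (n + 1 + i)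
        = ∑ i ∈ range k, G k p q (n + i) - G k p q n + G k p q (n + k) := by
      have e0 : ∑ i ∈ range k, G k p q (n + 1 + i) = ∑ i ∈ range k, G k p q (n + (i+1)) :=
        Finset.sum_congr rfl (fun i _ => by rw [show n + 1 + i = n + (i+1) from by omega])
      have e1 := Finset.sum_range_succ' (fun i => G k p q (n + i)) k
      have e2 := Finset.sum_range_succ (fun i => G k p q (n + i)) k
      simp only [Nat.add_zero] at e1
      rw [e0]
      linarith [e1, e2]
    rw [show n + 1 + k = n + k + 1 from by omega, hrec, hsum]
    linear_combination ih + G k p q (n + k) * hpq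
end Bounds

section Contract
variable {k : ℕ} {p q : ℝ} {f : ℕ → ℝ}
variable (hp : 0 < p) (hq : 0 < q) (hpq : p + q = 1)
variable (hrec : ∀ n, f (n + (k+1)) = q * f (n + k) + p * f n)

include hp hq hpq hrec in
lemma prop_ub (b : ℝ) (m : ℕ) (hwin : ∀ j ∈ Finset.Icc m (m+k), f j ≤ b) :
    ∀ j, m ≤ j → f j ≤ b := by
  intro j
  induction j using Nat.strong_induction_on with
  | _ j ih =>
    intro hj
    by_cases hjk : j ≤ m + k
    · exact hwin j (Finset.mem_Icc.mpr ⟨hj, hjk⟩)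
    · push_neg at hjk
      set n := j - (k+1) with hn
      have hj' : j = n + (k+1) := by omega
      rw [hj', hrec n]
      have h1 : f (n + k) ≤ b := ih (n+k) (by omega) (by omega)
      have h2 : f n ≤ b := ih n (by omega) (by omega)
      have e1 : q * b + p * b = b := by linear_combination b * hpq
      have e2 := mul_le_mul_of_nonneg_left h1 hq.le
      have e3 := mul_le_mul_of_nonneg_left h2 hp.le
      linarith

include hp hq hpq hrec in
lemma expand_ub (b : ℝ) (m : ℕ) (hb : ∀ j, m ≤ j → f j ≤ b) (j0 : ℕ) (hj0 : m ≤ j0) :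
    ∀ s, f (j0 + (k+1) + s) ≤ b - p * q^s * (b - f j0) := by
  intro s
  induction s with
  | zero =>
    have h := hrec j0
    have h1 : f (j0 + k) ≤ b := hb _ (by omega)
    rw [show j0 + (k+1) + 0 = j0 + (k+1) from rfl, h]
    have key : q * b + p * f j0 = b - p * q^0 * (b - f j0) := by
      simp only [pow_zero]
      linear_combination b * hpq
    have e2 := mul_le_mul_of_nonneg_left h1 hq.le
    linarith
  | succ s ihs =>
    have h := hrec (j0 + s + 1)
    have e : j0 + s + 1 + (k+1) = j0 + (k+1) + (s+1) := by omega
    have e2 : j0 + s + 1 + k = j0 + (k+1) + s := by omega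
    rw [e, e2] at h
    rw [h]
    have h1 : f (j0 + s + 1) ≤ b := hb _ (by omega)
    have h2 := ihs
    have hqb : q * f (j0 + (k+1) + s) ≤ q * (b - p * q^s * (b - f j0)) :=
      mul_le_mul_of_nonneg_left h2 hq.le
    have h3 : p * f (j0 + s + 1) ≤ p * b := mul_le_mul_of_nonneg_left h1 hp.le
    have key : q * (b - p * q^s * (b - f j0)) + p * b = b - p * q^(s+1) * (b - f j0) := by
      rw [pow_succ]
      linear_combination b * hpq
    linarith
end Contract

noncomputable def dd (k : ℕ) (p q : ℝ) (n : ℕ) : ℝ := G k p q (n+1) - G k p q n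

lemma Icc_ne (m k : ℕ) : (Finset.Icc m (m+k)).Nonempty :=
  Finset.nonempty_Icc.mpr (by omega)

noncomputable def Msup (k : ℕ) (p q : ℝ) (m : ℕ) : ℝ :=
  (Finset.Icc m (m+k)).sup' (Icc_ne m k) (dd k p q)

noncomputable def mu (k : ℕ) (p q : ℝ) (m : ℕ) : ℝ :=
  (Finset.Icc m (m+k)).inf' (Icc_ne m k) (dd k p q)

lemma dd_rec (k : ℕ) (p q : ℝ) :
    ∀ n, dd k p q (n + (k+1)) = q * dd k p q (n + k) + p * dd k p q n := by
  intro n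
  have e1 : G k p q (n + k + 1 + 1) = q * G k p q (n + k + 1) + p * G k p q (n + 1) := by
    have h := G_succ_ge k p q (n + k + 1) (by omega)
    rwa [show n + k + 1 - k = n + 1 from by omega] at h
  have e2 : G k p q (n + k + 1) = q * G k p q (n + k) + p * G k p q n := by
    have h := G_succ_ge k p q (n + k) (by omega)
    rwa [show n + k - k = n from by omega] at h
  unfold dd
  rw [show n + (k+1) = n + k + 1 from by omega, e1, e2]
  ring

lemma dd_rec_neg (k : ℕ) (p q : ℝ) :
    ∀ n, (fun n => -dd k p q n) (n + (k+1)) = q * (fun n => -dd k p q n) (n + k)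
      + p * (fun n => -dd k p q n) n := by
  intro n
  simp only
  rw [dd_rec k p q n]
  ring

section Limits
variable {k : ℕ} {p q : ℝ}
variable (hp : 0 < p) (hq : 0 < q) (hpq : p + q = 1)

include hp hq hpq in
lemma dd_le_Msup (m : ℕ) : ∀ j, m ≤ j → dd k p q j ≤ Msup k p q m :=
  prop_ub hp hq hpq (dd_rec k p q) _ m (fun j hj => Finset.le_sup' (dd k p q) hj)

include hp hq hpq in
lemma mu_le_dd (m : ℕ) : ∀ j, m ≤ j → mu k p q m ≤ dd k p q j := by
  intro j hj
  have h := prop_ub (f := fun n => -dd k p q n) hp hq hpq (dd_rec_neg k p q) (-(mu k p q m)) m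
    (fun i hi => neg_le_neg (Finset.inf'_le (dd k p q) hi)) j hj
  simpa using h

include hp hq hpq in
lemma Msup_anti : Antitone (Msup k p q) := by
  intro m m' hmm'
  apply Finset.sup'_le
  intro j hj
  exact dd_le_Msup hp hq hpq m j (le_trans hmm' (Finset.mem_Icc.mp hj).1)

include hp hq hpq in
lemma mu_mono : Monotone (mu k p q) := by
  intro m m' hmm'
  apply Finset.le_inf'
  intro j hj
  exact mu_le_dd hp hq hpq m j (le_trans hmm' (Finset.mem_Icc.mp hj).1)

lemma mu_le_Msup (k : ℕ) (p q : ℝ) (m : ℕ) : mu k p q m ≤ Msup k p q m := by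
  have h1 : mu k p q m ≤ dd k p q m := Finset.inf'_le _ (Finset.mem_Icc.mpr ⟨le_rfl, by omega⟩)
  have h2 : dd k p q m ≤ Msup k p q m := Finset.le_sup' _ (Finset.mem_Icc.mpr ⟨le_rfl, by omega⟩)
  linarith

include hp hq hpq in
lemma gap_contract (m : ℕ) :
    Msup k p q (m + (2*k+1)) - mu k p q (m + (2*k+1))
      ≤ (1 - p * q^(2*k)) * (Msup k p q m - mu k p q m) := by
  obtain ⟨j0, hj0mem, hj0⟩ := Finset.exists_mem_eq_inf' (Icc_ne m k) (dd k p q)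
  obtain ⟨hj0a, hj0b⟩ := Finset.mem_Icc.mp hj0mem
  have hq1 : q ≤ 1 := by linarith
  have hgap0 : 0 ≤ Msup k p q m - mu k p q m := by linarith [mu_le_Msup k p q m]
  have hub : ∀ j ∈ Finset.Icc (m + (2*k+1)) (m + (2*k+1) + k),
      dd k p q j ≤ Msup k p q m - p * q^(2*k) * (Msup k p q m - mu k p q m) := by
    intro j hj
    obtain ⟨hj1, hj2⟩ := Finset.mem_Icc.mp hj
    set s := j - j0 - (k+1) with hs
    have hjs : j = j0 + (k+1) + s := by omega
    have hexp := expand_ub hp hq hpq (dd_rec k p q) (Msup k p q m) m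
      (dd_le_Msup hp hq hpq m) j0 hj0a s
    have hmueq : mu k p q m = dd k p q j0 := hj0
    rw [← hjs, ← hmueq] at hexp
    have hs2k : s ≤ 2*k := by omega
    have hqpow : q^(2*k) ≤ q^s := pow_le_pow_of_le_one hq.le hq1 hs2k
    have hmono : p * q^(2*k) * (Msup k p q m - mu k p q m)
        ≤ p * q^s * (Msup k p q m - mu k p q m) :=
      mul_le_mul_of_nonneg_right (mul_le_mul_of_nonneg_left hqpow hp.le) hgap0
    linarith
  have hM' : Msup k p q (m + (2*k+1))
      ≤ Msup k p q m - p * q^(2*k) * (Msup k p q m - mu k p q m) :=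
    Finset.sup'_le _ _ hub
  have hmu' : mu k p q m ≤ mu k p q (m + (2*k+1)) := mu_mono hp hq hpq (by omega)
  have e : (1 - p*q^(2*k)) * (Msup k p q m - mu k p q m)
      = (Msup k p q m - mu k p q m) - p*q^(2*k) * (Msup k p q m - mu k p q m) := by ring
  rw [e]
  linarith

include hp hq hpq in
lemma gap_pow (n : ℕ) :
    Msup k p q (n * (2*k+1)) - mu k p q (n * (2*k+1))
      ≤ (1 - p * q^(2*k))^n * (Msup k p q 0 - mu k p q 0) := by
  have hq1 : q ≤ 1 := by linarith
  have hd1 : 0 ≤ 1 - p * q^(2*k) := by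
    have h1 : q^(2*k) ≤ 1 := pow_le_one₀ hq.le hq1
    nlinarith
  induction n with
  | zero => simp
  | succ n ih =>
    have h1 := gap_contract (k := k) hp hq hpq (n * (2*k+1))
    have e : (n+1) * (2*k+1) = n * (2*k+1) + (2*k+1) := by ring
    rw [e]
    calc Msup k p q (n * (2*k+1) + (2*k+1)) - mu k p q (n * (2*k+1) + (2*k+1))
        ≤ (1 - p * q^(2*k)) * (Msup k p q (n * (2*k+1)) - mu k p q (n * (2*k+1))) := h1
      _ ≤ (1 - p * q^(2*k)) * ((1 - p * q^(2*k))^n * (Msup k p q 0 - mu k p q 0)) :=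
          mul_le_mul_of_nonneg_left ih hd1
      _ = (1 - p * q^(2*k))^(n+1) * (Msup k p q 0 - mu k p q 0) := by ring
end Limits

lemma dd_tendsto (k : ℕ) (p q : ℝ) (hp : 0 < p) (hq : 0 < q) (hpq : p + q = 1) :
    ∃ L, Tendsto (dd k p q) atTop (nhds L) := by
  have hq1 : q ≤ 1 := by linarith
  -- M converges
  have hbddM : BddBelow (Set.range (Msup k p q)) := by
    refine ⟨mu k p q 0, ?_⟩
    rintro x ⟨m, rfl⟩
    exact le_trans (mu_mono hp hq hpq (Nat.zero_le m)) (mu_le_Msup k p q m)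
  have hbddmu : BddAbove (Set.range (mu k p q)) := by
    refine ⟨Msup k p q 0, ?_⟩
    rintro x ⟨m, rfl⟩
    exact le_trans (mu_le_Msup k p q m) (Msup_anti hp hq hpq (Nat.zero_le m))
  have hMlim : Tendsto (Msup k p q) atTop (nhds (⨅ m, Msup k p q m)) :=
    tendsto_atTop_ciInf (Msup_anti hp hq hpq) hbddM
  have hmulim : Tendsto (mu k p q) atTop (nhds (⨆ m, mu k p q m)) :=
    tendsto_atTop_ciSup (mu_mono hp hq hpq) hbddmu
  set L1 := ⨅ m, Msup k p q m with hL1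
  set L2 := ⨆ m, mu k p q m with hL2
  -- gap tends to zero along the subsequence
  have hφ : Tendsto (fun n : ℕ => n * (2*k+1)) atTop atTop :=
    tendsto_atTop_mono (fun n => Nat.le_mul_of_pos_right n (by omega)) tendsto_id
  have hsub : Tendsto (fun n : ℕ => Msup k p q (n * (2*k+1)) - mu k p q (n * (2*k+1)))
      atTop (nhds (L1 - L2)) := ((hMlim.comp hφ).sub (hmulim.comp hφ))
  have hδ : 0 ≤ 1 - p * q^(2*k) ∧ 1 - p * q^(2*k) < 1 := by
    constructor
    · have h1 : q^(2*k) ≤ 1 := pow_le_one₀ hq.le hq1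
      nlinarith
    · have h2 : 0 < q^(2*k) := pow_pos hq _
      nlinarith
  have hzero : Tendsto (fun n : ℕ => (1 - p * q^(2*k))^n * (Msup k p q 0 - mu k p q 0))
      atTop (nhds 0) := by
    have := (tendsto_pow_atTop_nhds_zero_of_lt_one hδ.1 hδ.2).mul_const
      (Msup k p q 0 - mu k p q 0)
    simpa using this
  have hle : L1 - L2 ≤ 0 :=
    le_of_tendsto_of_tendsto hsub hzero
      (Filter.Eventually.of_forall (fun n => gap_pow hp hq hpq n))
  have hge : L2 ≤ L1 := by
    apply ciSup_le
    intro m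
    apply le_ciInf
    intro m'
    calc mu k p q m ≤ mu k p q (m ⊔ m') := mu_mono hp hq hpq le_sup_left
      _ ≤ Msup k p q (m ⊔ m') := mu_le_Msup k p q _
      _ ≤ Msup k p q m' := Msup_anti hp hq hpq le_sup_right
  have hL : L1 = L2 := le_antisymm (by linarith) hge
  refine ⟨L1, ?_⟩
  apply tendsto_of_tendsto_of_tendsto_of_le_of_le (hL ▸ hmulim) hMlim
  · intro n
    exact Finset.inf'_le _ (Finset.mem_Icc.mpr ⟨le_rfl, by omega⟩)
  · intro n
    exact Finset.le_sup' _ (Finset.mem_Icc.mpr ⟨le_rfl, by omega⟩)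

lemma G_telescope (k : ℕ) (p q : ℝ) (n : ℕ) :
    ∀ b, b ≤ k → ∀ i, i ≤ b → G k p q (n + b) - G k p q (n + i)
      = ∑ j ∈ Finset.Ico i b, dd k p q (n + j) := by
  intro b hb i hib
  induction b, hib using Nat.le_induction with
  | base => simp
  | succ b hib ih =>
    rw [Finset.sum_Ico_succ_top hib, ← ih (by omega)]
    unfold dd
    have e : n + (b+1) = n + b + 1 := by omega
    rw [e]
    ring

lemma G_tendsto (k : ℕ) (p q : ℝ) (hp : 0 < p) (hq : 0 < q) (hpq : p + q = 1) :
    Tendsto (G k p q) atTop (nhds (1 / (1 + k * p))) := by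
  obtain ⟨L, hdL⟩ := dd_tendsto k p q hp hq hpq
  have hpk : (0:ℝ) < 1 + k * p := by positivity
  -- formula for G (n+k)
  have hform : ∀ n, G k p q (n + k)
      = (1 + p * ∑ i ∈ range k, ∑ j ∈ Finset.Ico i k, dd k p q (n + j)) / (1 + k * p) := by
    intro n
    have hw := G_window (k := k) (p := p) (q := q) hpq n
    have hts : ∑ i ∈ range k, ∑ j ∈ Finset.Ico i k, dd k p q (n + j)
        = ∑ i ∈ range k, (G k p q (n + k) - G k p q (n + i)) :=
      Finset.sum_congr rfl (fun i hi =>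
        (G_telescope k p q n k le_rfl i (le_of_lt (mem_range.mp hi))).symm)
    rw [hts, Finset.sum_sub_distrib, Finset.sum_const, Finset.card_range, nsmul_eq_mul]
    field_simp
    linear_combination hw
  have hshift : ∀ j : ℕ, Tendsto (fun n => dd k p q (n + j)) atTop (nhds L) :=
    fun j => (tendsto_add_atTop_iff_nat j).mpr hdL
  have hsum : Tendsto (fun n => ∑ i ∈ range k, ∑ j ∈ Finset.Ico i k, dd k p q (n + j)) atTop
      (nhds (∑ i ∈ range k, ∑ j ∈ Finset.Ico i k, L)) :=
    tendsto_finset_sum _ (fun i _ => tendsto_finset_sum _ (fun j _ => hshift j))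
  set S := ∑ i ∈ range k, ∑ j ∈ Finset.Ico i k, L with hS
  set l := (1 + p * S) / (1 + k * p) with hl
  have hGk : Tendsto (fun n => G k p q (n + k)) atTop (nhds l) := by
    have h1 : Tendsto (fun n =>
        (1 + p * ∑ i ∈ range k, ∑ j ∈ Finset.Ico i k, dd k p q (n + j)) / (1 + k * p))
        atTop (nhds l) := (tendsto_const_nhds.add (hsum.const_mul p)).div_const _
    exact h1.congr (fun n => (hform n).symm)
  have hG : Tendsto (G k p q) atTop (nhds l) := (tendsto_add_atTop_iff_nat k).mp hGk
  have h2 : Tendsto (fun n => ∑ i ∈ range k, G k p q (n + i)) atTop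
      (nhds (∑ _i ∈ range k, l)) :=
    tendsto_finset_sum _ (fun i _ => (tendsto_add_atTop_iff_nat i).mpr hG)
  rw [Finset.sum_const, Finset.card_range, nsmul_eq_mul] at h2
  have hWlim : Tendsto (fun n => G k p q (n + k) + p * ∑ i ∈ range k, G k p q (n + i))
      atTop (nhds (l + p * (k * l))) := hGk.add (h2.const_mul p)
  have hWconst : Tendsto (fun n => G k p q (n + k) + p * ∑ i ∈ range k, G k p q (n + i))
      atTop (nhds 1) := by
    have : (fun n => G k p q (n + k) + p * ∑ i ∈ range k, G k p q (n + i))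
        = fun _ => (1:ℝ) := funext (fun n => G_window hpq n)
    rw [this]
    exact tendsto_const_nhds
  have heq1 : l + p * ((k:ℝ) * l) = 1 := tendsto_nhds_unique hWlim hWconst
  have hlval : l = 1 / (1 + k * p) := by
    field_simp
    linarith
  rw [← hlval]
  exact hG

theorem stmt_6 (tstar : ℕ) (p : ℝ) (hp0 : 0 < p) (hp1 : p < 1) :
    Tendsto (fun t : ℕ =>
        ∑ x ∈ Finset.range ((t - 1) / (tstar + 1) + 1),
          ((t - 1 - x * tstar).choose x : ℝ) * p ^ x * (1 - p) ^ (t - (tstar + 1) * x))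
      atTop (nhds ((1 - p) / (1 + (tstar : ℝ) * p))) := by
  have hq : 0 < 1 - p := by linarith
  have hpq : p + (1 - p) = 1 := by ring
  have hG := G_tendsto tstar p (1 - p) hp0 hq hpq
  have hGt : Tendsto (fun t : ℕ => (1 - p) * G tstar p (1 - p) (t - 1)) atTop
      (nhds ((1 - p) * (1 / (1 + (tstar : ℝ) * p)))) :=
    (hG.comp (tendsto_sub_atTop_nat 1)).const_mul _
  have hval : (1 - p) * (1 / (1 + (tstar:ℝ) * p)) = (1 - p) / (1 + (tstar:ℝ) * p) :=
    mul_one_div _ _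
  rw [hval] at hGt
  apply hGt.congr'
  filter_upwards [eventually_ge_atTop 1] with t ht
  rw [G_formula tstar p (1-p) (t-1), Finset.mul_sum]
  apply Finset.sum_congr rfl
  intro x hx
  have hxr : x ≤ (t-1)/(tstar+1) := Nat.lt_succ_iff.mp (Finset.mem_range.mp hx)
  have hx' : x * (tstar + 1) ≤ t - 1 :=
    (Nat.le_div_iff_mul_le (by omega : 0 < tstar+1)).mp hxr
  have hcomm : (tstar+1) * x = x * (tstar+1) := mul_comm _ _
  have he : t - (tstar+1)*x = (t - 1 - (tstar+1)*x) + 1 := by omega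
  rw [he, pow_succ]
  ring
end

section
/- Fix p ∈ (0,1), a nonnegative integer t⋆, and a nonnegative integer x. Define g(t) := ∑_{j=(t⋆+1)x}^{t−1} ((x+1)/(j − t⋆x + 1)) · C(j − t⋆x, x) · p^{x+1} · (1−p)^{j−(t⋆+1)x}. Then g(t) converges as t → ∞ to p · ₂F₁(1, 1, 2+x, 1−p), where ₂F₁ is the Gauss hypergeometric function; i.e., lim_{t→∞} g(t) = p · ∑_{n=0}^{∞} (n!/(∏_{i=1}^{n}(x+1+i))) · (1−p)^n. -/
open Finset Filter

lemma choose_flip (x n : ℕ) : (x + n).choose n = (n + x).choose x := by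
  rw [Nat.add_comm x n]
  have h := Nat.choose_symm (Nat.le_add_left x n)
  simpa using h

lemma hasSum_C {z : ℝ} (hz0 : 0 < z) (hz1 : z < 1) (x : ℕ) :
    HasSum (fun n : ℕ => ((x + n).choose n : ℝ) * z ^ n) (1 / (1 - z) ^ (x + 1)) := by
  have h := hasSum_choose_mul_geometric_of_norm_lt_one (𝕜 := ℝ) x
    (r := z) (by rw [Real.norm_eq_abs, abs_of_pos hz0]; exact hz1)
  have e : (fun n : ℕ => ((x + n).choose n : ℝ) * z ^ n)
      = fun n => ((n + x).choose x : ℝ) * z ^ n := by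
    funext n
    rw [choose_flip]
  rw [e]
  exact h

noncomputable def Rt (z : ℝ) (x : ℕ) : ℝ :=
  ∑' n : ℕ, ((x + n).choose n : ℝ) * z ^ n / ((x : ℝ) + n + 1)

noncomputable def Bt (z : ℝ) (x : ℕ) : ℝ :=
  ∑' n : ℕ, (n.factorial : ℝ) * ((x + 1).factorial : ℝ) / ((x + n + 1).factorial : ℝ) * z ^ n

lemma summable_R {z : ℝ} (hz0 : 0 < z) (hz1 : z < 1) (x : ℕ) :
    Summable (fun n : ℕ => ((x + n).choose n : ℝ) * z ^ n / ((x : ℝ) + n + 1)) := by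
  refine Summable.of_nonneg_of_le (fun n => by positivity)
    (fun n => ?_) (hasSum_C hz0 hz1 x).summable
  have h1 : (0:ℝ) ≤ ((x + n).choose n : ℝ) * z ^ n := by positivity
  have h2 : (1 : ℝ) ≤ (x : ℝ) + n + 1 := by
    have hx : (0:ℝ) ≤ x := Nat.cast_nonneg x
    have hn : (0:ℝ) ≤ n := Nat.cast_nonneg n
    linarith
  exact div_le_self h1 h2

lemma summable_B {z : ℝ} (hz0 : 0 < z) (hz1 : z < 1) (x : ℕ) :
    Summable (fun n : ℕ =>
      (n.factorial : ℝ) * ((x + 1).factorial : ℝ) / ((x + n + 1).factorial : ℝ) * z ^ n) := by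
  refine Summable.of_nonneg_of_le (fun n => by positivity) (fun n => ?_)
    (summable_geometric_of_lt_one hz0.le hz1)
  have hd : (n.factorial * (x + 1).factorial : ℕ) ≤ (x + n + 1).factorial := by
    apply Nat.le_of_dvd (Nat.factorial_pos _)
    have := Nat.factorial_mul_factorial_dvd_factorial_add n (x + 1)
    simpa [Nat.add_comm, Nat.add_assoc, Nat.add_left_comm] using this
  calc (n.factorial : ℝ) * ((x + 1).factorial : ℝ) / ((x + n + 1).factorial : ℝ) * z ^ n
      ≤ 1 * z ^ n := by
        apply mul_le_mul_of_nonneg_right _ (by positivity)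
        rw [div_le_one (by positivity)]
        exact_mod_cast hd
    _ = z ^ n := one_mul _

lemma chooseKey (x n : ℕ) :
    (x + 1) * ((x + n + 2).choose (n + 1)) = (x + n + 2) * ((x + n + 1).choose (n + 1)) := by
  have h1 : (x + n + 1).choose (n + 1) = (x + n + 1).choose x := by
    have := Nat.choose_symm (show n + 1 ≤ x + n + 1 by omega)
    simpa [show x + n + 1 - (n + 1) = x by omega] using this.symm
  have h2 : (x + n + 2).choose (n + 1) = (x + n + 2).choose (x + 1) := by
    have := Nat.choose_symm (show n + 1 ≤ x + n + 2 by omega)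
    simpa [show x + n + 2 - (n + 1) = x + 1 by omega] using this.symm
  have h3 := Nat.add_one_mul_choose_eq (x + n + 1) x
  rw [h1, h2]
  calc (x + 1) * (x + n + 2).choose (x + 1) = (x + n + 2).choose (x + 1) * (x + 1) :=
        Nat.mul_comm _ _
    _ = (x + n + 1).succ * (x + n + 1).choose x := h3.symm
    _ = (x + n + 2) * (x + n + 1).choose x := rfl

lemma termKey {z : ℝ} (x n : ℕ) :
    z * ((((x + 1) + n).choose n : ℝ) * z ^ n / (((x + 1 : ℕ) : ℝ) + n + 1))
      + ((x + (n + 1)).choose (n + 1) : ℝ) * z ^ (n + 1) / ((x : ℝ) + (n + 1) + 1)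
    = ((x + (n + 1)).choose (n + 1) : ℝ) * z ^ (n + 1) / ((x : ℝ) + 1) := by
  have hd : ((x : ℝ) + n + 2) > 0 := by positivity
  have hx1 : ((x : ℝ) + 1) > 0 := by positivity
  have hP : ((x + n + 2).choose (n + 1) : ℝ)
      = ((x + 1 + n).choose n : ℝ) + ((x + (n + 1)).choose (n + 1) : ℝ) := by
    have := Nat.choose_succ_succ' (x + n + 1) n
    have e1 : x + n + 1 + 1 = x + n + 2 := by omega
    have e2 : x + 1 + n = x + n + 1 := by omega
    have e3 : x + (n + 1) = x + n + 1 := by omega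
    rw [e1] at this
    rw [e2, e3]
    exact_mod_cast this
  have hK : ((x : ℝ) + 1) * ((x + n + 2).choose (n + 1) : ℝ)
      = ((x : ℝ) + n + 2) * ((x + (n + 1)).choose (n + 1) : ℝ) := by
    have := chooseKey x n
    have e3 : x + (n + 1) = x + n + 1 := by omega
    rw [e3]
    exact_mod_cast this
  have hcast : (((x + 1 : ℕ) : ℝ) + n + 1) = (x : ℝ) + n + 2 := by push_cast; ring
  have hc2 : ((x : ℝ) + (n + 1) + 1) = (x : ℝ) + n + 2 := by push_cast; ring
  rw [hcast, hc2]
  have e : z * (((x + 1 + n).choose n : ℝ) * z ^ n / ((x : ℝ) + n + 2))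
      + ((x + (n + 1)).choose (n + 1) : ℝ) * z ^ (n + 1) / ((x : ℝ) + n + 2)
      = (((x + 1 + n).choose n : ℝ) + ((x + (n + 1)).choose (n + 1) : ℝ)) * z ^ (n + 1)
          / ((x : ℝ) + n + 2) := by ring
  rw [e, ← hP, div_eq_div_iff hd.ne' hx1.ne']
  linear_combination z ^ (n + 1) * hK

lemma R_rec {z : ℝ} (hz0 : 0 < z) (hz1 : z < 1) (x : ℕ) :
    z * Rt z (x + 1) + Rt z x = 1 / ((1 - z) ^ (x + 1) * ((x : ℝ) + 1)) := by
  have hC := hasSum_C hz0 hz1 x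
  have sR := summable_R hz0 hz1 x
  have sR1 := summable_R hz0 hz1 (x + 1)
  have hCs : Summable (fun n : ℕ => ((x + n).choose n : ℝ) * z ^ n / ((x : ℝ) + 1)) :=
    hC.summable.div_const _
  have hA : Summable (fun n : ℕ =>
      z * ((((x + 1) + n).choose n : ℝ) * z ^ n / (((x + 1 : ℕ) : ℝ) + (n : ℝ) + 1))) :=
    sR1.mul_left z
  have hB2 : Summable (fun n : ℕ =>
      ((x + (n + 1)).choose (n + 1) : ℝ) * z ^ (n + 1) / ((x : ℝ) + ((n + 1 : ℕ) : ℝ) + 1)) :=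
    (summable_nat_add_iff 1).mpr sR
  have key2 : ∀ n : ℕ,
      z * ((((x + 1) + n).choose n : ℝ) * z ^ n / (((x + 1 : ℕ) : ℝ) + (n : ℝ) + 1))
        + ((x + (n + 1)).choose (n + 1) : ℝ) * z ^ (n + 1) / ((x : ℝ) + ((n + 1 : ℕ) : ℝ) + 1)
      = ((x + (n + 1)).choose (n + 1) : ℝ) * z ^ (n + 1) / ((x : ℝ) + 1) := by
    intro n
    have h := termKey (z := z) x n
    push_cast at h ⊢
    linear_combination h
  have e1 : z * Rt z (x + 1) = ∑' n : ℕ,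
      z * ((((x + 1) + n).choose n : ℝ) * z ^ n / (((x + 1 : ℕ) : ℝ) + (n : ℝ) + 1)) := by
    rw [Rt, tsum_mul_left]
  have e2 := Summable.tsum_eq_zero_add sR
  have e3 := Summable.tsum_eq_zero_add hCs
  have e4 : ∑' n : ℕ, ((x + n).choose n : ℝ) * z ^ n / ((x : ℝ) + 1)
      = 1 / ((1 - z) ^ (x + 1) * ((x : ℝ) + 1)) := by
    rw [tsum_div_const, hC.tsum_eq, div_div]
  have e5 : (∑' n : ℕ,
        z * ((((x + 1) + n).choose n : ℝ) * z ^ n / (((x + 1 : ℕ) : ℝ) + (n : ℝ) + 1)))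
      + (∑' n : ℕ,
        ((x + (n + 1)).choose (n + 1) : ℝ) * z ^ (n + 1) / ((x : ℝ) + ((n + 1 : ℕ) : ℝ) + 1))
      = ∑' n : ℕ, ((x + (n + 1)).choose (n + 1) : ℝ) * z ^ (n + 1) / ((x : ℝ) + 1) := by
    rw [← Summable.tsum_add hA hB2]
    exact tsum_congr key2
  rw [e1, Rt, e2]
  simp only [Nat.choose_zero_right, Nat.cast_one, pow_zero, Nat.cast_zero, one_mul,
    add_zero, Nat.add_zero] at e3 ⊢
  linarith [e3, e4, e5]

lemma bKey (x k : ℕ) :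
    ((x : ℝ) + 1) * ((k.factorial : ℝ) * (((x + 1) + 1).factorial : ℝ)
        / (((x + 1) + k + 1).factorial : ℝ))
      = ((x : ℝ) + 2) * ((k.factorial : ℝ) * ((x + 1).factorial : ℝ) / ((x + k + 1).factorial : ℝ)
        - ((k + 1).factorial : ℝ) * ((x + 1).factorial : ℝ)
            / ((x + (k + 1) + 1).factorial : ℝ)) := by
  have e1 : (x + 1) + 1 = x + 2 := by omega
  have e2 : (x + 1) + k + 1 = x + k + 2 := by omega
  have e3 : x + (k + 1) + 1 = x + k + 2 := by omega
  rw [e1, e2, e3]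
  have f1 : ((x + k + 2).factorial : ℝ) = ((x : ℝ) + (k : ℝ) + 2) * ((x + k + 1).factorial : ℝ) := by
    rw [show x + k + 2 = (x + k + 1) + 1 from by omega, Nat.factorial_succ]
    push_cast
    ring
  have f2 : ((x + 2).factorial : ℝ) = ((x : ℝ) + 2) * ((x + 1).factorial : ℝ) := by
    rw [show x + 2 = (x + 1) + 1 from by omega, Nat.factorial_succ]
    push_cast
    ring
  have f3 : (((k + 1)).factorial : ℝ) = ((k : ℝ) + 1) * (k.factorial : ℝ) := by
    rw [Nat.factorial_succ]
    push_cast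
    ring
  have p1 : ((x + k + 1).factorial : ℝ) ≠ 0 := by
    exact_mod_cast (Nat.factorial_pos _).ne'
  have p2 : ((x : ℝ) + (k : ℝ) + 2) ≠ 0 := by positivity
  rw [f1, f2, f3]
  field_simp
  ring

lemma summable_B2 {z : ℝ} (hz0 : 0 < z) (hz1 : z < 1) (x : ℕ) :
    Summable (fun n : ℕ =>
      ((n + 1).factorial : ℝ) * ((x + 1).factorial : ℝ) / ((x + (n + 1) + 1).factorial : ℝ)
        * z ^ n) := by
  refine Summable.of_nonneg_of_le (fun n => by positivity) (fun n => ?_)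
    (summable_geometric_of_lt_one hz0.le hz1)
  have hd : ((n + 1).factorial * (x + 1).factorial : ℕ) ≤ (x + (n + 1) + 1).factorial := by
    apply Nat.le_of_dvd (Nat.factorial_pos _)
    have := Nat.factorial_mul_factorial_dvd_factorial_add (n + 1) (x + 1)
    simpa [show n + 1 + (x + 1) = x + (n + 1) + 1 by omega] using this
  calc ((n + 1).factorial : ℝ) * ((x + 1).factorial : ℝ) / ((x + (n + 1) + 1).factorial : ℝ)
        * z ^ n
      ≤ 1 * z ^ n := by
        apply mul_le_mul_of_nonneg_right _ (by positivity)
        rw [div_le_one (by positivity)]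
        exact_mod_cast hd
    _ = z ^ n := one_mul _

lemma B_rec {z : ℝ} (hz0 : 0 < z) (hz1 : z < 1) (x : ℕ) :
    ((x : ℝ) + 1) * z * Bt z (x + 1) = ((x : ℝ) + 2) * (1 - (1 - z) * Bt z x) := by
  have sB := summable_B hz0 hz1 x
  have sB1 := summable_B hz0 hz1 (x + 1)
  have sB2 := summable_B2 hz0 hz1 x
  set T2 : ℝ := ∑' n : ℕ,
    ((n + 1).factorial : ℝ) * ((x + 1).factorial : ℝ) / ((x + (n + 1) + 1).factorial : ℝ)
      * z ^ n with hT2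
  -- z * T2 = Bt z x - 1
  have h3 := Summable.tsum_eq_zero_add sB
  have h4 : z * T2 = ∑' n : ℕ,
      ((n + 1).factorial : ℝ) * ((x + 1).factorial : ℝ) / ((x + (n + 1) + 1).factorial : ℝ)
        * z ^ (n + 1) := by
    rw [hT2, ← tsum_mul_left]
    exact tsum_congr fun n => by ring
  have h5 : z * T2 = Bt z x - 1 := by
    have hfne : (((x + 1).factorial : ℝ)) ≠ 0 := by exact_mod_cast (Nat.factorial_pos _).ne'
    rw [h4, Bt, h3]
    simp [div_self hfne]
  -- main identity
  have h2 : ((x : ℝ) + 1) * Bt z (x + 1) = ((x : ℝ) + 2) * (Bt z x - T2) := by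
    rw [Bt, ← tsum_mul_left]
    have step : ∀ k : ℕ,
        ((x : ℝ) + 1) * ((k.factorial : ℝ) * (((x + 1) + 1).factorial : ℝ)
            / (((x + 1) + k + 1).factorial : ℝ) * z ^ k)
          = ((x : ℝ) + 2) * ((k.factorial : ℝ) * ((x + 1).factorial : ℝ)
              / ((x + k + 1).factorial : ℝ) * z ^ k
            - ((k + 1).factorial : ℝ) * ((x + 1).factorial : ℝ)
              / ((x + (k + 1) + 1).factorial : ℝ) * z ^ k) := by
      intro k
      have := bKey x k
      linear_combination z ^ k * this
    rw [tsum_congr step]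
    rw [tsum_mul_left, Summable.tsum_sub sB sB2, Bt, hT2]
  linear_combination z * h2 - ((x : ℝ) + 2) * h5

lemma mainId {z : ℝ} (hz0 : 0 < z) (hz1 : z < 1) (x : ℕ) :
    ((x : ℝ) + 1) * (1 - z) ^ (x + 1) * Rt z x = (1 - z) * Bt z x := by
  induction x with
  | zero =>
      have hRB : Rt z 0 = Bt z 0 := by
        rw [Rt, Bt]
        refine tsum_congr fun n => ?_
        have hf : ((0 + n + 1).factorial : ℝ) = ((n : ℝ) + 1) * (n.factorial : ℝ) := by
          rw [show 0 + n + 1 = n + 1 from by omega, Nat.factorial_succ]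
          push_cast
          ring
        have hne : (n.factorial : ℝ) ≠ 0 := by exact_mod_cast (Nat.factorial_pos _).ne'
        have hn1 : ((n : ℝ) + 1) ≠ 0 := by positivity
        rw [hf]
        simp only [Nat.zero_add, Nat.choose_self, Nat.cast_one, one_mul, Nat.factorial_one,
          Nat.cast_zero, Nat.cast_ofNat, zero_add]
        field_simp
      rw [hRB]
      norm_num
  | succ x IH =>
      have hR := R_rec hz0 hz1 x
      have hB := B_rec hz0 hz1 x
      have ha : (1 - z) ≠ 0 := by linarith
      have hx1 : ((x : ℝ) + 1) ≠ 0 := by positivity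
      have hR' : ((x : ℝ) + 1) * (1 - z) ^ (x + 1) * (z * Rt z (x + 1) + Rt z x) = 1 := by
        rw [hR, mul_one_div, div_eq_one_iff_eq (mul_ne_zero (pow_ne_zero _ ha) hx1)]
        ring
      have goal' : ((x : ℝ) + 1) * z * (((x : ℝ) + 2) * (1 - z) ^ (x + 2) * Rt z (x + 1))
          = ((x : ℝ) + 1) * z * ((1 - z) * Bt z (x + 1)) := by
        linear_combination ((x : ℝ) + 2) * (1 - z) * hR' - (1 - z) * hB
          - ((x : ℝ) + 2) * (1 - z) * IH
      have hc := mul_left_cancel₀ (mul_ne_zero hx1 hz0.ne') goal'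
      push_cast
      linear_combination hc

lemma prodIcc (x n : ℕ) :
    ∏ i ∈ Finset.Icc 1 n, ((x : ℝ) + 1 + (i : ℝ))
      = ((x + n + 1).factorial : ℝ) / ((x + 1).factorial : ℝ) := by
  have hne : ((x + 1).factorial : ℝ) ≠ 0 := by exact_mod_cast (Nat.factorial_pos _).ne'
  induction n with
  | zero => simp [div_self hne]
  | succ n ih =>
      rw [Finset.prod_Icc_succ_top (Nat.le_add_left 1 n), ih]
      have hf : ((x + (n + 1) + 1).factorial : ℝ)
          = ((x : ℝ) + (n : ℝ) + 2) * ((x + n + 1).factorial : ℝ) := by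
        rw [show x + (n + 1) + 1 = (x + n + 1) + 1 from by omega, Nat.factorial_succ]
        push_cast
        ring
      rw [hf]
      push_cast
      field_simp
      ring

theorem stmt_19 (p : ℝ) (hp0 : 0 < p) (hp1 : p < 1) (tstar x : ℕ) :
    Tendsto (fun t : ℕ =>
        ∑ j ∈ Finset.Ico ((tstar + 1) * x) t,
          (((x : ℝ) + 1) / (((j - tstar * x : ℕ) : ℝ) + 1))
            * ((j - tstar * x).choose x : ℝ) * p ^ (x + 1) * (1 - p) ^ (j - (tstar + 1) * x))
      atTop
      (nhds (p * ∑' n : ℕ,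
        ((n.factorial : ℝ) / ∏ i ∈ Finset.Icc 1 n, ((x : ℝ) + 1 + (i : ℝ))) * (1 - p) ^ n)) := by
  have hz0 : 0 < 1 - p := by linarith
  have hz1 : 1 - p < 1 := by linarith
  -- the reindexed summand
  set f : ℕ → ℝ := fun n =>
    ((x : ℝ) + 1) / (((x + n : ℕ) : ℝ) + 1) * ((x + n).choose x : ℝ) * p ^ (x + 1)
      * (1 - p) ^ n with hf
  -- value identity
  have hval : ((x : ℝ) + 1) * p ^ (x + 1) * Rt (1 - p) x = p * Bt (1 - p) x := by
    have h := mainId hz0 hz1 x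
    have e : (1 : ℝ) - (1 - p) = p := by ring
    rw [e] at h
    linear_combination h
  -- HasSum f (p * Bt (1-p) x)
  have hhs : HasSum f (p * Bt (1 - p) x) := by
    rw [← hval]
    have h0 : HasSum (fun n : ℕ => ((x + n).choose n : ℝ) * (1 - p) ^ n / ((x : ℝ) + n + 1))
        (Rt (1 - p) x) := (summable_R hz0 hz1 x).hasSum
    have h1 := h0.mul_left (((x : ℝ) + 1) * p ^ (x + 1))
    have hfe : f = fun n : ℕ => ((x : ℝ) + 1) * p ^ (x + 1)
        * (((x + n).choose n : ℝ) * (1 - p) ^ n / ((x : ℝ) + n + 1)) := by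
      funext n
      have e : (x + n).choose x = (x + n).choose n := by
        rw [choose_flip x n, Nat.add_comm n x]
      rw [hf]
      simp only [e]
      push_cast
      ring
    rw [hfe]
    exact h1
  -- Bt equals the stated tsum
  have hBt : Bt (1 - p) x = ∑' n : ℕ,
      ((n.factorial : ℝ) / ∏ i ∈ Finset.Icc 1 n, ((x : ℝ) + 1 + (i : ℝ))) * (1 - p) ^ n := by
    rw [Bt]
    refine tsum_congr fun n => ?_
    rw [prodIcc, div_div_eq_mul_div]
  rw [← hBt]
  -- partial sums
  have h5 := hhs.tendsto_sum_nat
  have h6 : Tendsto (fun t : ℕ => t - (tstar + 1) * x) atTop atTop :=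
    tendsto_sub_atTop_nat _
  have h7 := h5.comp h6
  convert h7 using 1
  funext t
  rw [Function.comp_apply, Finset.sum_Ico_eq_sum_range]
  refine Finset.sum_congr rfl fun i _ => ?_
  have hc : (tstar + 1) * x = tstar * x + x := by ring
  have e1 : (tstar + 1) * x + i - tstar * x = x + i := by omega
  have e2 : (tstar + 1) * x + i - (tstar + 1) * x = i := by omega
  rw [e1, e2, hf]
end
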